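/- If 0 < q < 1 and f : [0,∞) → ℝ is continuously differentiable with f constant on [T,∞) for some T > 0, then the Caputo derivative D_*^q f(t) = (1/Γ(1-q)) ∫_0^t (t-τ)^{-q} f'(τ) dτ tends to 0 as t → ∞ but is not identically zero on [T,∞) unless f is constant on [0,∞). -/

import Mathlib

open MeasureTheory Real Filter

/-- Caputo fractional derivative of order `q` with starting point `0`. -/
noncomputable def caputo (q : ℝ) (f : ℝ → ℝ) (t : ℝ) : ℝ :=
  (1 / Real.Gamma (1 - q)) * ∫ τ in (0:ℝ)..t, (t - τ) ^ (-q) * deriv f τ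

/-- Two-parameter Mittag-Leffler function (real arguments). -/
noncomputable def ML (a b z : ℝ) : ℝ :=
  ∑' k : ℕ, z ^ k / Real.Gamma (a * k + b)

set_option maxHeartbeats 1000000

open Set intervalIntegral


lemma deriv_zero_of_const_right {f : ℝ → ℝ} {T : ℝ} (hf : ContDiff ℝ 1 f)
    (hconst : ∀ t : ℝ, T ≤ t → f t = f T) : ∀ τ : ℝ, T ≤ τ → deriv f τ = 0 := by
  have hgt : ∀ τ : ℝ, T < τ → deriv f τ = 0 := by
    intro τ hτ
    have h : f =ᶠ[nhds τ] fun _ => f T := by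
      filter_upwards [Ioi_mem_nhds hτ] with x hx
      exact hconst x (le_of_lt hx)
    rw [h.deriv_eq, deriv_const]
  intro τ hτ
  rcases eq_or_lt_of_le hτ with h | h
  · subst h
    have hc : Tendsto (deriv f) (nhdsWithin T (Set.Ioi T)) (nhds (deriv f T)) :=
      ((hf.continuous_deriv le_rfl).continuousAt).tendsto.mono_left nhdsWithin_le_nhds
    have hc0 : Tendsto (deriv f) (nhdsWithin T (Set.Ioi T)) (nhds 0) := by
      apply Tendsto.congr' _ tendsto_const_nhds
      filter_upwards [self_mem_nhdsWithin] with x hx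
      exact (hgt x hx).symm
    exact tendsto_nhds_unique hc hc0
  · exact hgt τ h

lemma cont_integrand {f : ℝ → ℝ} {T : ℝ} (hf : ContDiff ℝ 1 f)
    (hconst : ∀ t : ℝ, T ≤ t → f t = f T) {t : ℝ} (ht : T < t) (c : ℝ) :
    Continuous fun τ => (t - τ) ^ c * deriv f τ := by
  have hd := hf.continuous_deriv le_rfl
  rw [continuous_iff_continuousAt]
  intro x
  rcases lt_or_ge x t with hx | hx
  · have h0 : t - x ≠ 0 := by intro h; linarith [sub_pos.mpr hx]
    exact ((continuousAt_const.sub continuousAt_id).rpow_const (Or.inl h0)).mul hd.continuousAt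
  · have hev : (fun τ => (t - τ) ^ c * deriv f τ) =ᶠ[nhds x] fun _ => (0:ℝ) := by
      filter_upwards [Ioi_mem_nhds (lt_of_lt_of_le ht hx)] with y hy
      rw [deriv_zero_of_const_right hf hconst y (le_of_lt hy), mul_zero]
    exact (continuousAt_congr hev).mpr continuousAt_const

lemma contOn_integrand {f : ℝ → ℝ} (hf : ContDiff ℝ 1 f) {t A B : ℝ}
    (h : ∀ τ ∈ Set.Icc A B, τ < t) (c : ℝ) :
    ContinuousOn (fun τ => (t - τ) ^ c * deriv f τ) (Set.Icc A B) := by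
  intro τ hτ
  have h0 : t - τ ≠ 0 := by have := h τ hτ; intro hh; linarith [sub_eq_zero.mp hh]
  exact (((continuousAt_const.sub continuousAt_id).rpow_const (Or.inl h0)).mul
    ((hf.continuous_deriv le_rfl).continuousAt)).continuousWithinAt

lemma integral_split {f : ℝ → ℝ} {T : ℝ} (hf : ContDiff ℝ 1 f) (hT : 0 < T)
    (hconst : ∀ t : ℝ, T ≤ t → f t = f T) {t : ℝ} (ht : T < t) (c : ℝ) :
    ∫ τ in (0:ℝ)..t, (t - τ) ^ c * deriv f τ
      = ∫ τ in (0:ℝ)..T, (t - τ) ^ c * deriv f τ := by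
  have hcont := cont_integrand hf hconst ht c
  have h1 : IntervalIntegrable (fun τ => (t - τ) ^ c * deriv f τ) volume 0 T :=
    hcont.intervalIntegrable _ _
  have h2 : IntervalIntegrable (fun τ => (t - τ) ^ c * deriv f τ) volume T t :=
    hcont.intervalIntegrable _ _
  rw [← integral_add_adjacent_intervals h1 h2]
  have : ∫ τ in T..t, (t - τ) ^ c * deriv f τ = 0 := by
    rw [integral_congr (g := fun _ => (0:ℝ))]
    · simp
    · intro τ hτ
      rw [Set.uIcc_of_le (le_of_lt ht)] at hτ
      simp only
      rw [deriv_zero_of_const_right hf hconst τ hτ.1, mul_zero]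
  rw [this, add_zero]

lemma caputo_tendsto {q T : ℝ} (hq0 : 0 < q) (hT : 0 < T)
    {f : ℝ → ℝ} (hf : ContDiff ℝ 1 f)
    (hconst : ∀ t : ℝ, T ≤ t → f t = f T) :
    Tendsto (caputo q f) atTop (nhds 0) := by
  set C : ℝ := 1 / Real.Gamma (1 - q) with hC
  set M : ℝ := ∫ τ in (0:ℝ)..T, |deriv f τ| with hM
  have key : ∀ t : ℝ, T < t → ‖caputo q f t‖ ≤ |C| * ((t - T) ^ (-q) * M) := by
    intro t ht
    have hcont := cont_integrand hf hconst ht (-q)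
    have h1 : |∫ τ in (0:ℝ)..t, (t - τ) ^ (-q) * deriv f τ| ≤ (t - T) ^ (-q) * M := by
      rw [integral_split hf hT hconst ht (-q)]
      calc |∫ τ in (0:ℝ)..T, (t - τ) ^ (-q) * deriv f τ|
          ≤ ∫ τ in (0:ℝ)..T, |(t - τ) ^ (-q) * deriv f τ| :=
            intervalIntegral.abs_integral_le_integral_abs (le_of_lt hT)
        _ ≤ ∫ τ in (0:ℝ)..T, (t - T) ^ (-q) * |deriv f τ| := by
            apply intervalIntegral.integral_mono_on (le_of_lt hT)
              (hcont.abs.intervalIntegrable _ _)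
              ((continuous_const.mul (hf.continuous_deriv le_rfl).abs).intervalIntegrable _ _)
            intro τ hτ
            have h2 : (0:ℝ) < t - T := sub_pos.mpr ht
            have h3 : t - T ≤ t - τ := by linarith [hτ.2]
            rw [abs_mul, abs_of_nonneg (Real.rpow_nonneg (by linarith : (0:ℝ) ≤ t - τ) _)]
            exact mul_le_mul_of_nonneg_right
              (Real.rpow_le_rpow_of_nonpos h2 h3 (by linarith)) (abs_nonneg _)
        _ = (t - T) ^ (-q) * M := intervalIntegral.integral_const_mul _ _
    rw [caputo, ← hC, Real.norm_eq_abs, abs_mul]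
    exact mul_le_mul_of_nonneg_left h1 (abs_nonneg _)
  have hlim : Tendsto (fun t : ℝ => |C| * ((t - T) ^ (-q) * M)) atTop (nhds 0) := by
    have h0 : Tendsto (fun t : ℝ => (t - T) ^ (-q)) atTop (nhds 0) := by
      have := (tendsto_rpow_neg_atTop hq0).comp
        (tendsto_atTop_add_const_right atTop (-T) tendsto_id)
      simpa [Function.comp_def, sub_eq_add_neg] using this
    have := (h0.mul_const M).const_mul |C|
    simpa using this
  exact squeeze_zero_norm' (by filter_upwards [eventually_gt_atTop T] with t ht using key t ht) hlim

lemma moments_zero {q T : ℝ} (hq0 : 0 < q) (hT : 0 < T) {f : ℝ → ℝ} (hf : ContDiff ℝ 1 f)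
    (h0 : ∀ t : ℝ, T < t → ∫ τ in (0:ℝ)..T, (t - τ) ^ (-q) * deriv f τ = 0) :
    ∀ n : ℕ, ∀ t : ℝ, T < t → ∫ τ in (0:ℝ)..T, (t - τ) ^ (-(q + n)) * deriv f τ = 0 := by
  obtain ⟨K, hK⟩ := isCompact_Icc.exists_bound_of_continuousOn
    ((hf.continuous_deriv le_rfl).continuousOn (s := Set.Icc 0 T))
  have hK0 : 0 ≤ K := le_trans (norm_nonneg _) (hK T ⟨le_of_lt hT, le_refl T⟩)
  intro n
  induction n with
  | zero => intro t ht; simpa using h0 t ht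
  | succ n IH =>
    intro t0 ht0
    set c : ℝ := -(q + n) with hc
    have hcneg : c < 0 := by
      have : (0:ℝ) ≤ n := Nat.cast_nonneg n
      rw [hc]; linarith
    set δ : ℝ := (t0 - T) / 2 with hδ
    have hδ0 : 0 < δ := by rw [hδ]; linarith
    have hball : ∀ x ∈ Metric.ball t0 δ, ∀ τ ∈ Set.Ioc (0:ℝ) T, δ ≤ x - τ ∧ 0 < x - τ := by
      intro x hx τ hτ
      rw [Metric.mem_ball, Real.dist_eq, abs_lt] at hx
      constructor <;> [skip; skip] <;> nlinarith [hτ.2, hτ.1]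
    have huIoc : Set.uIoc (0:ℝ) T = Set.Ioc 0 T := Set.uIoc_of_le (le_of_lt hT)
    have hderiv := intervalIntegral.hasDerivAt_integral_of_dominated_loc_of_deriv_le
      (F := fun x τ => (x - τ) ^ c * deriv f τ)
      (F' := fun x τ => c * ((x - τ) ^ (c - 1) * deriv f τ))
      (bound := fun _ => |c| * (δ ^ (c - 1) * K))
      (μ := volume) (a := 0) (b := T) (x₀ := t0) (Metric.ball_mem_nhds t0 hδ0)
      (by
        filter_upwards [Ioi_mem_nhds ht0] with x hx
        apply ContinuousOn.aestronglyMeasurable _ measurableSet_uIoc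
        rw [huIoc]
        intro τ hτ
        rw [Set.mem_Ioi] at hx
        have h2 : x - τ ≠ 0 := by
          intro hh
          have := sub_eq_zero.mp hh
          linarith [hτ.2]
        exact (((continuousAt_const.sub continuousAt_id).rpow_const (Or.inl h2)).mul
          ((hf.continuous_deriv le_rfl).continuousAt)).continuousWithinAt)
      (by
        apply ContinuousOn.intervalIntegrable
        rw [Set.uIcc_of_le (le_of_lt hT)]
        exact contOn_integrand hf (fun τ hτ => by linarith [hτ.2]) c)
      (by
        apply ContinuousOn.aestronglyMeasurable _ measurableSet_uIoc
        rw [huIoc]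
        apply ContinuousOn.mono (s := Set.Icc 0 T) _ Set.Ioc_subset_Icc_self
        exact continuousOn_const.mul (contOn_integrand hf (fun τ hτ => by linarith [hτ.2]) (c - 1)))
      (by
        apply Filter.Eventually.of_forall
        intro τ hτ x hx
        rw [huIoc] at hτ
        obtain ⟨hd1, hd2⟩ := hball x hx τ hτ
        rw [norm_mul, norm_mul, Real.norm_eq_abs, Real.norm_eq_abs, Real.norm_eq_abs]
        apply mul_le_mul_of_nonneg_left _ (abs_nonneg c)
        have e1 : |(x - τ) ^ (c - 1)| = (x - τ) ^ (c - 1) :=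
          abs_of_nonneg (Real.rpow_nonneg (le_of_lt hd2) _)
        rw [e1]
        have e2 : (x - τ) ^ (c - 1) ≤ δ ^ (c - 1) :=
          Real.rpow_le_rpow_of_nonpos hδ0 hd1 (by linarith)
        have e3 : |deriv f τ| ≤ K := hK τ (Set.Ioc_subset_Icc_self hτ)
        have e4 : 0 ≤ (x - τ) ^ (c - 1) := Real.rpow_nonneg (le_of_lt hd2) _
        nlinarith [abs_nonneg (deriv f τ), Real.rpow_nonneg (le_of_lt hδ0) (c - 1)]
        )
      (by apply _root_.intervalIntegrable_const)
      (by
        apply Filter.Eventually.of_forall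
        intro τ hτ x hx
        rw [huIoc] at hτ
        obtain ⟨hd1, hd2⟩ := hball x hx τ hτ
        have h := (((hasDerivAt_id' (x := x)).sub_const τ).rpow_const (p := c)
          (Or.inl (ne_of_gt hd2))).mul_const (deriv f τ)
        exact h.congr_deriv (by ring))
    have hev : (fun x => ∫ τ in (0:ℝ)..T, (x - τ) ^ c * deriv f τ) =ᶠ[nhds t0]
        fun _ => (0:ℝ) := by
      filter_upwards [Ioi_mem_nhds ht0] with x hx
      exact IH x hx
    have hzero : HasDerivAt (fun x => ∫ τ in (0:ℝ)..T, (x - τ) ^ c * deriv f τ) 0 t0 :=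
      (hasDerivAt_const t0 (0:ℝ)).congr_of_eventuallyEq hev
    have heq : ∫ τ in (0:ℝ)..T, c * ((t0 - τ) ^ (c - 1) * deriv f τ) = 0 :=
      hderiv.2.unique hzero
    rw [intervalIntegral.integral_const_mul] at heq
    have hint : ∫ τ in (0:ℝ)..T, (t0 - τ) ^ (c - 1) * deriv f τ = 0 := by
      rcases mul_eq_zero.mp heq with h | h
      · exact absurd h (ne_of_lt hcneg)
      · exact h
    have hcast : -(q + ((n:ℝ) + 1)) = c - 1 := by rw [hc]; ring
    rw [show ((n + 1 : ℕ) : ℝ) = (n : ℝ) + 1 by push_cast; ring, hcast]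
    exact hint

lemma deriv_ae_zero {q T : ℝ} (hq0 : 0 < q) (hT : 0 < T) {f : ℝ → ℝ} (hf : ContDiff ℝ 1 f)
    (h0 : ∀ t : ℝ, T < t → ∫ τ in (0:ℝ)..T, (t - τ) ^ (-q) * deriv f τ = 0) :
    ∀ᵐ τ ∂(volume : Measure ℝ), τ ∈ Set.Ioc 0 T → deriv f τ = 0 := by
  set G : ℝ → ℝ := fun τ => (T + 1 - τ) ^ (-q) * deriv f τ with hG
  set y : ℝ → ℝ := fun τ => (T + 1 - τ)⁻¹ with hy
  have hmem : ∀ τ ∈ Set.Icc (0:ℝ) T, (1:ℝ) ≤ T + 1 - τ ∧ T + 1 - τ ≤ T + 1 := by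
    intro τ hτ; constructor <;> [linarith [hτ.2]; linarith [hτ.1]]
  have hGcont : ContinuousOn G (Set.Icc 0 T) :=
    contOn_integrand hf (fun τ hτ => by linarith [hτ.2]) (-q)
  have hycont : ContinuousOn y (Set.Icc 0 T) := by
    apply ContinuousOn.inv₀ (continuousOn_const.sub continuousOn_id)
    intro τ hτ
    have := (hmem τ hτ).1
    simp only [Pi.sub_apply, id_eq]
    intro hh; rw [hh] at this; linarith
  -- monomial moments
  have hmono : ∀ n : ℕ, ∫ τ in (0:ℝ)..T, y τ ^ n * G τ = 0 := by
    intro n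
    have hkey := moments_zero hq0 hT hf h0 n (T + 1) (by linarith)
    refine Eq.trans ?_ hkey
    apply intervalIntegral.integral_congr
    intro τ hτ
    rw [Set.uIcc_of_le (le_of_lt hT)] at hτ
    have hpos : (0:ℝ) < T + 1 - τ := by linarith [(hmem τ hτ).1]
    simp only [hy, hG]
    rw [← mul_assoc]
    congr 1
    rw [inv_pow, ← Real.rpow_natCast (T + 1 - τ) n, ← Real.rpow_neg (le_of_lt hpos),
      ← Real.rpow_add hpos]
    congr 1
    ring
  -- polynomial moments
  have hpolycont : ∀ p : Polynomial ℝ,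
      ContinuousOn (fun τ => p.eval (y τ) * G τ) (Set.Icc 0 T) :=
    fun p => (p.continuous.comp_continuousOn hycont).mul hGcont
  have hpoly : ∀ p : Polynomial ℝ, ∫ τ in (0:ℝ)..T, p.eval (y τ) * G τ = 0 := by
    intro p
    induction p using Polynomial.induction_on' with
    | add p r hp hr =>
      have i1 : IntervalIntegrable (fun τ => p.eval (y τ) * G τ) volume 0 T := by
        apply ContinuousOn.intervalIntegrable
        rw [Set.uIcc_of_le (le_of_lt hT)]
        exact hpolycont p
      have i2 : IntervalIntegrable (fun τ => r.eval (y τ) * G τ) volume 0 T := by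
        apply ContinuousOn.intervalIntegrable
        rw [Set.uIcc_of_le (le_of_lt hT)]
        exact hpolycont r
      have : (fun τ => (p + r).eval (y τ) * G τ)
          = fun τ => p.eval (y τ) * G τ + r.eval (y τ) * G τ := by
        funext τ; rw [Polynomial.eval_add]; ring
      rw [this, intervalIntegral.integral_add i1 i2, hp, hr, add_zero]
    | monomial n a =>
      have : (fun τ => ((Polynomial.monomial n a).eval (y τ)) * G τ)
          = fun τ => a * (y τ ^ n * G τ) := by
        funext τ; rw [Polynomial.eval_monomial]; ring
      rw [this, intervalIntegral.integral_const_mul, hmono n, mul_zero]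
  -- Weierstrass approximation step
  set a : ℝ := (T + 1)⁻¹ with ha
  have ha0 : 0 < a := by rw [ha]; positivity
  set Hfun : ℝ → ℝ := fun s => s ^ q * deriv f (T + 1 - s⁻¹) with hHfun
  have hHcont : ContinuousOn Hfun (Set.Icc a 1) := by
    intro s hs
    have hs0 : (0:ℝ) < s := lt_of_lt_of_le ha0 hs.1
    exact ((continuousAt_rpow_const s q (Or.inl hs0.ne')).mul
      (((hf.continuous_deriv le_rfl).continuousAt).comp
        (continuousAt_const.sub (continuousAt_inv₀ hs0.ne')))).continuousWithinAt
  have hymem : ∀ τ ∈ Set.Icc (0:ℝ) T, y τ ∈ Set.Icc a 1 := by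
    intro τ hτ
    obtain ⟨h1, h2⟩ := hmem τ hτ
    constructor
    · exact inv_anti₀ (by linarith) h2
    · calc y τ ≤ 1⁻¹ := inv_anti₀ one_pos h1
        _ = 1 := inv_one
  have hHy : ∀ τ ∈ Set.Icc (0:ℝ) T, Hfun (y τ) = G τ := by
    intro τ hτ
    obtain ⟨h1, h2⟩ := hmem τ hτ
    have hpos : (0:ℝ) < T + 1 - τ := by linarith
    simp only [hHfun, hy, hG]
    rw [inv_inv, Real.inv_rpow (le_of_lt hpos), ← Real.rpow_neg (le_of_lt hpos)]
    congr 2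
    ring
  set A : ℝ := ∫ τ in (0:ℝ)..T, |G τ| with hA
  have hGG_int : IntervalIntegrable (fun τ => G τ * G τ) volume 0 T := by
    apply ContinuousOn.intervalIntegrable
    rw [Set.uIcc_of_le (le_of_lt hT)]
    exact hGcont.mul hGcont
  have hclaim : ∀ ε : ℝ, 0 < ε → ∫ τ in (0:ℝ)..T, G τ * G τ ≤ ε * A := by
    intro ε hε
    set H : C(Set.Icc a 1, ℝ) := ContinuousMap.mk ((Set.Icc a 1).restrict Hfun)
      hHcont.restrict with hH
    obtain ⟨p, hp⟩ := exists_polynomial_near_continuousMap a 1 H ε hε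
    have hpt : ∀ τ ∈ Set.Icc (0:ℝ) T, |G τ - p.eval (y τ)| ≤ ε := by
      intro τ hτ
      have hs : y τ ∈ Set.Icc a 1 := hymem τ hτ
      have hle := le_trans (ContinuousMap.norm_coe_le_norm
        (p.toContinuousMapOn (Set.Icc a 1) - H) ⟨y τ, hs⟩) (le_of_lt hp)
      simp only [ContinuousMap.sub_apply, Polynomial.toContinuousMapOn_apply,
        Polynomial.toContinuousMap_apply, ContinuousMap.coe_mk, Set.restrict_apply,
        Real.norm_eq_abs] at hle
      rw [show H ⟨y τ, hs⟩ = Hfun (y τ) from rfl, hHy τ hτ] at hle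
      rw [abs_sub_comm]
      exact hle
    have i2 : IntervalIntegrable (fun τ => p.eval (y τ) * G τ) volume 0 T := by
      apply ContinuousOn.intervalIntegrable
      rw [Set.uIcc_of_le (le_of_lt hT)]
      exact hpolycont p
    have hsub : ∫ τ in (0:ℝ)..T, G τ * G τ
        = ∫ τ in (0:ℝ)..T, (G τ - p.eval (y τ)) * G τ := by
      have he : (fun τ => (G τ - p.eval (y τ)) * G τ)
          = fun τ => G τ * G τ - p.eval (y τ) * G τ := by funext τ; ring
      rw [he, intervalIntegral.integral_sub hGG_int i2, hpoly p, sub_zero]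
    rw [hsub]
    have i3 : IntervalIntegrable (fun τ => (G τ - p.eval (y τ)) * G τ) volume 0 T := by
      apply ContinuousOn.intervalIntegrable
      rw [Set.uIcc_of_le (le_of_lt hT)]
      exact ((hGcont.sub (p.continuous.comp_continuousOn hycont)).mul hGcont)
    have i4 : IntervalIntegrable (fun τ => ε * |G τ|) volume 0 T := by
      apply ContinuousOn.intervalIntegrable
      rw [Set.uIcc_of_le (le_of_lt hT)]
      exact continuousOn_const.mul hGcont.abs
    calc ∫ τ in (0:ℝ)..T, (G τ - p.eval (y τ)) * G τ
        ≤ ∫ τ in (0:ℝ)..T, ε * |G τ| := by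
          apply intervalIntegral.integral_mono_on (le_of_lt hT) i3 i4
          intro τ hτ
          calc (G τ - p.eval (y τ)) * G τ ≤ |(G τ - p.eval (y τ)) * G τ| := le_abs_self _
            _ = |G τ - p.eval (y τ)| * |G τ| := abs_mul _ _
            _ ≤ ε * |G τ| := mul_le_mul_of_nonneg_right (hpt τ hτ) (abs_nonneg _)
      _ = ε * A := intervalIntegral.integral_const_mul ε _
  have hA0 : 0 ≤ A := by
    rw [hA]
    exact intervalIntegral.integral_nonneg (le_of_lt hT) (fun τ _ => abs_nonneg _)
  have hGG0 : 0 ≤ ∫ τ in (0:ℝ)..T, G τ * G τ :=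
    intervalIntegral.integral_nonneg (le_of_lt hT) (fun τ _ => mul_self_nonneg _)
  have hGGeq : ∫ τ in (0:ℝ)..T, G τ * G τ = 0 := by
    by_contra h
    have hpos : 0 < ∫ τ in (0:ℝ)..T, G τ * G τ := lt_of_le_of_ne hGG0 (Ne.symm h)
    set c2 : ℝ := ∫ τ in (0:ℝ)..T, G τ * G τ
    have hεpos : 0 < c2 / (2 * (A + 1)) := by positivity
    have hcl := hclaim (c2 / (2 * (A + 1))) hεpos
    rw [div_mul_eq_mul_div, le_div_iff₀ (by positivity)] at hcl
    nlinarith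
  have hae2 := (intervalIntegral.integral_eq_zero_iff_of_le_of_nonneg_ae (le_of_lt hT)
    (Filter.Eventually.of_forall fun τ => mul_self_nonneg _) hGG_int).mp hGGeq
  rw [Filter.EventuallyEq, ae_restrict_iff' measurableSet_Ioc] at hae2
  filter_upwards [hae2] with τ hτ hmemτ
  have hGτ : G τ = 0 := mul_self_eq_zero.mp (by simpa using hτ hmemτ)
  have hpos : (0:ℝ) < T + 1 - τ := by linarith [hmemτ.2]
  have h1 : (T + 1 - τ) ^ (-q) ≠ 0 := ne_of_gt (Real.rpow_pos_of_pos hpos _)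
  simp only [hG] at hGτ
  rcases mul_eq_zero.mp hGτ with h | h
  · exact absurd h h1
  · exact h

theorem caputo_eventually_constant
    (q T : ℝ) (hq0 : 0 < q) (hq1 : q < 1) (hT : 0 < T)
    (f : ℝ → ℝ) (hf : ContDiff ℝ 1 f)
    (hconst : ∀ t : ℝ, T ≤ t → f t = f T) :
    Tendsto (caputo q f) atTop (nhds 0) ∧
      (¬ (∀ t : ℝ, 0 ≤ t → f t = f 0) → ¬ ∀ t : ℝ, T ≤ t → caputo q f t = 0) := by
  constructor
  · exact caputo_tendsto hq0 hT hf hconst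
  · intro hne hcz
    apply hne
    have hΓ : (1 : ℝ) / Real.Gamma (1 - q) ≠ 0 :=
      one_div_ne_zero (ne_of_gt (Real.Gamma_pos_of_pos (by linarith)))
    have h0 : ∀ t : ℝ, T < t → ∫ τ in (0:ℝ)..T, (t - τ) ^ (-q) * deriv f τ = 0 := by
      intro t ht
      have hz := hcz t (le_of_lt ht)
      rw [caputo] at hz
      have h2 := (mul_eq_zero.mp hz).resolve_left hΓ
      rwa [integral_split hf hT hconst ht (-q)] at h2
    have hae := deriv_ae_zero hq0 hT hf h0
    have hmain : ∀ t : ℝ, 0 ≤ t → t ≤ T → f t = f 0 := by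
      intro t ht0 htT
      have hftc : ∫ τ in (0:ℝ)..t, deriv f τ = f t - f 0 :=
        intervalIntegral.integral_deriv_eq_sub
          (fun x _ => (hf.differentiable one_ne_zero).differentiableAt)
          (((hf.continuous_deriv le_rfl)).intervalIntegrable _ _)
      have hzero : ∫ τ in (0:ℝ)..t, deriv f τ = 0 := by
        have hcg : ∀ᵐ τ ∂(volume : Measure ℝ), τ ∈ Set.uIoc 0 t →
            deriv f τ = (fun _ => (0:ℝ)) τ := by
          filter_upwards [hae] with τ hτ hmemτ
          rw [Set.uIoc_of_le ht0] at hmemτ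
          exact hτ ⟨hmemτ.1, le_trans hmemτ.2 htT⟩
        rw [intervalIntegral.integral_congr_ae hcg]
        simp
      linarith [hftc, hzero]
    intro t ht
    rcases le_or_gt t T with h | h
    · exact hmain t ht h
    · rw [hconst t (le_of_lt h)]
      exact hmain T (le_of_lt hT) le_rfl
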